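/- Let f : ℤ → ℂ satisfy f(0) = 0 and f(i)·(f(i+j) - f(i) - f(j)) = 0 for all i,j ∈ ℤ. If d is the smallest positive integer with f(d) ≠ 0 and f(d) = d, then f(i) = i for all i ∈ ℤ. -/

import Mathlib

/-- If `f : ℤ → ℂ` with `f 0 = 0` satisfies `f(i)(f(i+j) - f(i) - f(j)) = 0`, and
`d` is the smallest positive integer with `f d ≠ 0`, normalized so that `f d = d`,
then `f i = i` for all `i`. -/
theorem case_B_f_is_identity (f : ℤ → ℂ) (h0 : f 0 = 0)
    (heq : ∀ i j : ℤ, f i * (f (i + j) - f i - f j) = 0)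
    (d : ℤ) (hd : 0 < d) (hmin : ∀ i : ℤ, 0 < i → i < d → f i = 0)
    (hfd : f d ≠ 0) (hnorm : f d = (d : ℂ)) :
    ∀ i : ℤ, f i = (i : ℂ) := by
  have hdC : (d : ℂ) ≠ 0 := Int.cast_ne_zero.mpr hd.ne'
  have hP : ∀ j : ℤ, f (d + j) = f j + (d : ℂ) := by
    intro j
    have h := heq d j
    rcases mul_eq_zero.mp h with h' | h'
    · exact absurd h' hfd
    · have : f (d + j) = f d + f j := by linear_combination h'
      rw [this, hnorm]; ring
  have hfd1 : f (d + 1) ≠ 0 := by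
    rw [hP 1]
    rcases eq_or_lt_of_le (by omega : (1:ℤ) ≤ d) with h1 | h1
    · have hf1 : f 1 = 1 := by rw [← h1] at hnorm; simpa using hnorm
      rw [hf1, ← h1]; norm_num
    · rw [hmin 1 (by omega) h1, zero_add]
      exact hdC
  have hQ : ∀ j : ℤ, f (d + 1 + j) = f j + f (d + 1) := by
    intro j
    have h := heq (d + 1) j
    rcases mul_eq_zero.mp h with h' | h'
    · exact absurd h' hfd1
    · linear_combination h'
  set c : ℂ := f (d + 1) - d with hc
  have key : ∀ j : ℤ, f (1 + j) = f j + c := by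
    intro j
    have h1 : f (d + (1 + j)) = f (1 + j) + (d : ℂ) := hP (1 + j)
    have h2 : f (d + 1 + j) = f j + f (d + 1) := hQ j
    have h3 : d + (1 + j) = d + 1 + j := by ring
    rw [h3] at h1
    rw [h2] at h1
    linear_combination -h1
  have main : ∀ i : ℤ, f i = i * c := by
    intro i
    induction i using Int.induction_on with
    | zero => simpa using h0
    | succ n ih =>
      have := key n
      rw [add_comm (1:ℤ) n] at this
      rw [this, ih]; push_cast; ring
    | pred n ih =>
      have := key (-n - 1)
      have h3 : (1 : ℤ) + (-n - 1) = -n := by ring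
      rw [h3] at this
      have : f (-(n:ℤ) - 1) = f (-n) - c := eq_sub_of_add_eq this.symm
      rw [this, ih]; push_cast; ring
  have hc1 : c = 1 := by
    have h : (d : ℂ) * c = d * 1 := by
      rw [mul_one]; exact (main d).symm.trans hnorm
    exact mul_left_cancel₀ hdC h
  intro i
  rw [main i, hc1, mul_one]
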